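/- Let ω = 2π/m for an integer m ≥ 2. With θ = 0 (no positional rotation), the Retrieval discrepancy Δ(n) = 1 - max{cos(k·ω) : k ∈ ℤ, k not divisible by m} equals 1 - cos(ω) > 0 and is independent of the input length n. -/

import Mathlib

open Real

lemma cos_interval_le {ω x : ℝ} (hω0 : 0 < ω) (hωπ : ω ≤ π)
    (h1 : ω ≤ x) (h2 : x ≤ 2 * π - ω) : Real.cos x ≤ Real.cos ω := by
  rcases le_or_gt x π with hx | hx
  · exact Real.cos_le_cos_of_nonneg_of_le_pi hω0.le hx h1
  · have : Real.cos x = Real.cos (2 * π - x) := by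
      rw [Real.cos_sub, Real.cos_two_pi, Real.sin_two_pi]; ring
    rw [this]
    exact Real.cos_le_cos_of_nonneg_of_le_pi hω0.le (by linarith) (by linarith)

lemma key (m : ℕ) (hm : 2 ≤ m) (k : ℤ) (hk : ¬ ((m : ℤ) ∣ k)) :
    Real.cos ((k : ℝ) * (2 * π / m)) ≤ Real.cos (2 * π / m) := by
  have hm0 : (0 : ℝ) < m := by positivity
  set ω : ℝ := 2 * π / m with hωdef
  have hω0 : 0 < ω := by
    apply div_pos (by positivity) hm0
  have hωπ : ω ≤ π := by
    rw [hωdef, div_le_iff₀ hm0]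
    have h2 : (2:ℝ) ≤ m := by exact_mod_cast hm
    nlinarith [Real.pi_pos]
  have hmω : (m : ℝ) * ω = 2 * π := by
    rw [hωdef]; field_simp
  set r : ℤ := k % m with hr
  set q : ℤ := k / m with hq
  have hk_eq : (m : ℤ) * q + r = k := Int.mul_ediv_add_emod k m
  have hr0 : 0 ≤ r := Int.emod_nonneg k (by positivity)
  have hrm : r < m := Int.emod_lt_of_pos k (by positivity)
  have hr1 : 1 ≤ r := by
    rcases hr0.lt_or_eq with h | h
    · exact h
    · exact absurd (Int.dvd_of_emod_eq_zero h.symm) hk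
  have hcast : (k : ℝ) * ω = (r : ℝ) * ω + q * (2 * π) := by
    have : (k : ℝ) = (m : ℝ) * q + r := by exact_mod_cast congrArg (Int.cast : ℤ → ℝ) hk_eq |>.symm
    rw [this, ← hmω]; ring
  rw [hcast, Real.cos_add_int_mul_two_pi]
  apply cos_interval_le hω0 hωπ
  · have : (1 : ℝ) ≤ (r : ℝ) := by exact_mod_cast hr1
    nlinarith
  · have h1 : (r : ℝ) ≤ (m : ℝ) - 1 := by
      have : r ≤ (m : ℤ) - 1 := by omega
      exact_mod_cast this
    nlinarith

theorem nope_retrieval_discrepancy (m : ℕ) (hm : 2 ≤ m) :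
    1 - sSup {c : ℝ | ∃ k : ℤ, ¬ ((m : ℤ) ∣ k) ∧ c = Real.cos ((k : ℝ) * (2 * π / m))}
        = 1 - Real.cos (2 * π / m) ∧
    0 < 1 - Real.cos (2 * π / m) := by
  have hm0 : (0 : ℝ) < m := by positivity
  have hω0 : 0 < 2 * π / m := div_pos (by positivity) hm0
  have hωπ : 2 * π / m ≤ π := by
    rw [div_le_iff₀ hm0]
    have h2 : (2:ℝ) ≤ m := by exact_mod_cast hm
    nlinarith [Real.pi_pos]
  constructor
  · have hgreat : IsGreatest
        {c : ℝ | ∃ k : ℤ, ¬ ((m : ℤ) ∣ k) ∧ c = Real.cos ((k : ℝ) * (2 * π / m))}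
        (Real.cos (2 * π / m)) := by
      constructor
      · exact ⟨1, fun h => by have := Int.le_of_dvd one_pos h; omega, by norm_num⟩
      · rintro c ⟨k, hk, rfl⟩
        exact key m hm k hk
    rw [hgreat.csSup_eq]
  · have : Real.cos (2 * π / m) < Real.cos 0 :=
      Real.cos_lt_cos_of_nonneg_of_le_pi le_rfl hωπ hω0
    rw [Real.cos_zero] at this
    linarith
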